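/- Let A₁ ≤ … ≤ A_ℓ be a chain of (m−1)-element subsets of {2,…,n} and γ = ∏_{k=1}^ℓ β_{A_k}. Then for every (i,j) ∈ V, the exponent of x_{i,j} in γ equals max{k ∈ [ℓ] : (i,j) is to the right of D_{A_k}} + ℓ − min{k ∈ [ℓ] : (i,j) is to the left of D_{A_k}} + 1, with the conventions that the max is 0 if the set is empty and the min is ℓ+1 if the set is empty. -/
import Mathlib


open MvPolynomial Finset

/-- The set `V = {(i,j) ∈ [m]×[n] : m−i < j ≤ n−i+1}` (1-based indices). -/
def Vset (m n : ℕ) : Finset (ℕ × ℕ) :=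
  ((Finset.Icc 1 m) ×ˢ (Finset.Icc 1 n)).filter
    (fun p => m - p.1 < p.2 ∧ p.2 ≤ n - p.1 + 1)

/-- `a : ℕ → ℕ` represents an `(m−1)`-element subset `A = {a 1 < … < a (m−1)} ⊆ {2,…,n}`,
together with the conventions `a 0 = 1` and `a m = n + 1`. -/
def SubsetRep (m n : ℕ) (a : ℕ → ℕ) : Prop :=
  a 0 = 1 ∧ a m = n + 1 ∧ ∀ i < m, a i < a (i + 1)

/-- The region `D_A = {(i,j) ∈ V : a_{m−i} ≤ j < a_{m−i+1}}`. -/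
def Dset (m n : ℕ) (a : ℕ → ℕ) : Finset (ℕ × ℕ) :=
  (Vset m n).filter (fun p => a (m - p.1) ≤ p.2 ∧ p.2 < a (m - p.1 + 1))

variable (K : Type*) [Field K]

/-- The squarefree monomial `β_A = ∏_{(i,j) ∈ V ∖ D_A} x_{i,j}`. -/
noncomputable def betaM (m n : ℕ) (a : ℕ → ℕ) : MvPolynomial (ℕ × ℕ) K :=
  ∏ p ∈ Vset m n \ Dset m n a, X p

/-- The antidiagonal monomial `α_j = ∏_{i=1}^m x_{m−i+1, j+i−1}`. -/
noncomputable def alphaM (m : ℕ) (j : ℕ) : MvPolynomial (ℕ × ℕ) K :=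
  ∏ i ∈ Finset.Icc 1 m, X (m - i + 1, j + i - 1)

/-- The ideal `N` generated by the monomials `β_A` for all `(m−1)`-element subsets
`A ⊆ {2,…,n}`. -/
noncomputable def Nideal (m n : ℕ) : Ideal (MvPolynomial (ℕ × ℕ) K) :=
  Ideal.span { f | ∃ a : ℕ → ℕ, SubsetRep m n a ∧ f = betaM K m n a }

/-- `A k`, `1 ≤ k ≤ s`, is a chain `A₁ ≤ … ≤ A_s` of `(m−1)`-element subsets of `{2,…,n}`,
where `≤` is the componentwise partial order. -/
def BetaChain (m n s : ℕ) (A : ℕ → ℕ → ℕ) : Prop :=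
  (∀ k, 1 ≤ k → k ≤ s → SubsetRep m n (A k)) ∧
    (∀ k, 1 ≤ k → k + 1 ≤ s → ∀ i ≤ m, A k i ≤ A (k + 1) i)

/-- `W^{[2]}` : the ideal generated by the squares of all the monomials in `W`. -/
noncomputable def bracketTwo {σ : Type*} (W : Ideal (MvPolynomial σ K)) :
    Ideal (MvPolynomial σ K) :=
  Ideal.span { g | ∃ d : σ →₀ ℕ, (monomial d (1 : K)) ∈ W ∧ g = (monomial d (1 : K)) ^ 2 }

/-- The symbolic power `I^{(n)} = ⋂_{p ∈ Min(I)} (pⁿ R_p ∩ R)`. -/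
noncomputable def symbolicPower {R : Type*} [CommRing R] (I : Ideal R) (n : ℕ) : Ideal R :=
  ⨅ p : {q : Ideal R // q ∈ I.minimalPrimes},
    letI : p.1.IsPrime := p.2.1.1
    ((p.1 ^ n).map (algebraMap R (Localization.AtPrime p.1))).comap
      (algebraMap R (Localization.AtPrime p.1))

/-- For a chain `A₁ ≤ … ≤ A_ℓ` and `γ = ∏_{k=1}^ℓ β_{A_k}`, the
exponent of `x_{i,j}` in `γ` equals
`max{k : (i,j) right of D_{A_k}} + ℓ − min{k : (i,j) left of D_{A_k}} + 1`,
with the max being `0` and the min being `ℓ+1` when the respective set is empty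
(the formula is written with truncated subtraction as `max + (ℓ + 1 − min)`). -/
lemma aux_prod_monomial {σ ι : Type*} (t : Finset ι) (d : ι → (σ →₀ ℕ)) :
    (∏ k ∈ t, monomial (d k) (1 : K)) = monomial (∑ k ∈ t, d k) 1 := by
  classical
  induction t using Finset.cons_induction with
  | empty => simp
  | cons a s ha ih =>
      rw [Finset.prod_cons, Finset.sum_cons, ih, monomial_mul, one_mul]

lemma aux_prod_X {σ : Type*} [DecidableEq σ] (s : Finset σ) :
    (∏ p ∈ s, (X p : MvPolynomial σ K)) = monomial (∑ p ∈ s, Finsupp.single p 1) 1 := by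
  rw [← aux_prod_monomial]
  exact Finset.prod_congr rfl fun p _ => rfl

lemma aux_degreeOf {σ ι : Type*} [DecidableEq σ] (q : σ) (t : Finset ι)
    (s : ι → Finset σ) :
    MvPolynomial.degreeOf q (∏ k ∈ t, ∏ p ∈ s k, (X p : MvPolynomial σ K)) =
      (t.filter (fun k => q ∈ s k)).card := by
  classical
  have h1 : (∏ k ∈ t, ∏ p ∈ s k, (X p : MvPolynomial σ K)) =
      monomial (∑ k ∈ t, ∑ p ∈ s k, Finsupp.single p 1) 1 := by
    rw [← aux_prod_monomial]
    exact Finset.prod_congr rfl fun k _ => aux_prod_X K _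
  rw [h1, degreeOf_monomial_eq _ _ (one_ne_zero)]
  rw [Finset.sum_apply']
  have h2 : ∀ k ∈ t, (∑ p ∈ s k, Finsupp.single p 1) q =
      (if q ∈ s k then 1 else 0) := by
    intro k _
    rw [Finset.sum_apply']
    simp only [Finsupp.single_apply]
    exact Finset.sum_ite_eq' (s k) q (fun _ => 1)
  rw [Finset.sum_congr rfl h2, ← Finset.card_filter]

lemma aux_chain_mono (m n ℓ : ℕ) (A : ℕ → ℕ → ℕ) (hA : BetaChain m n ℓ A)
    (i' : ℕ) (hi' : i' ≤ m) :
    ∀ k k', 1 ≤ k → k ≤ k' → k' ≤ ℓ → A k i' ≤ A k' i' := by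
  intro k k' hk hkk' hk'
  induction k' with
  | zero => omega
  | succ k'' ih =>
      rcases Nat.eq_or_lt_of_le hkk' with h | h
      · subst h; exact le_refl _
      · have h1 : 1 ≤ k'' := by omega
        have := hA.2 k'' h1 (by omega) i' hi'
        exact le_trans (ih (by omega) (by omega)) this

/-- For a chain `A₁ ≤ … ≤ A_ℓ` and `γ = ∏_{k=1}^ℓ β_{A_k}`, the
exponent of `x_{i,j}` in `γ` equals
`max{k : (i,j) right of D_{A_k}} + ℓ − min{k : (i,j) left of D_{A_k}} + 1`,
with the max being `0` and the min being `ℓ+1` when the respective set is empty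
(the formula is written with truncated subtraction as `max + (ℓ + 1 − min)`). -/
theorem stmt_8 (m n ℓ : ℕ) (hm : 1 ≤ m) (hmn : m ≤ n)
    (A : ℕ → ℕ → ℕ) (hA : BetaChain m n ℓ A) (i j : ℕ) (hij : (i, j) ∈ Vset m n) :
    MvPolynomial.degreeOf (i, j) (∏ k ∈ Finset.Icc 1 ℓ, betaM K m n (A k)) =
      ((Finset.Icc 1 ℓ).filter (fun k => A k (m - i + 1) ≤ j)).sup id +
        (ℓ + 1 -
          (if h : ((Finset.Icc 1 ℓ).filter (fun k => j < A k (m - i))).Nonempty then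
            ((Finset.Icc 1 ℓ).filter (fun k => j < A k (m - i))).min' h
          else ℓ + 1)) := by
  classical
  have hi1 : 1 ≤ i := by
    simp only [Vset, Finset.mem_filter, Finset.mem_product, Finset.mem_Icc] at hij
    exact hij.1.1.1
  -- compute the degree as a cardinality
  have hdeg : MvPolynomial.degreeOf (i, j) (∏ k ∈ Finset.Icc 1 ℓ, betaM K m n (A k)) =
      ((Finset.Icc 1 ℓ).filter (fun k => (i, j) ∈ Vset m n \ Dset m n (A k))).card := by
    simpa [betaM] using
      aux_degreeOf K (i, j) (Finset.Icc 1 ℓ) (fun k => Vset m n \ Dset m n (A k))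
  rw [hdeg]
  -- rewrite the membership condition
  have hcond : ∀ k ∈ Finset.Icc 1 ℓ,
      ((i, j) ∈ Vset m n \ Dset m n (A k)) ↔
        (A k (m - i + 1) ≤ j ∨ j < A k (m - i)) := by
    intro k hk
    simp only [Finset.mem_sdiff, Dset, Finset.mem_filter, hij, true_and, not_and, not_lt]
    constructor
    · intro h
      by_cases h2 : A k (m - i) ≤ j
      · exact Or.inl (h h2)
      · exact Or.inr (by omega)
    · intro h h2
      rcases h with h | h
      · exact h
      · omega
  rw [Finset.filter_congr hcond, Finset.filter_or]
  -- disjointness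
  have hdisj : Disjoint ((Finset.Icc 1 ℓ).filter (fun k => A k (m - i + 1) ≤ j))
      ((Finset.Icc 1 ℓ).filter (fun k => j < A k (m - i))) := by
    rw [Finset.disjoint_left]
    intro k hk1 hk2
    simp only [Finset.mem_filter, Finset.mem_Icc] at hk1 hk2
    have hsub := (hA.1 k hk1.1.1 hk1.1.2).2.2 (m - i) (by omega)
    omega
  rw [Finset.card_union_of_disjoint hdisj]
  set SR := (Finset.Icc 1 ℓ).filter (fun k => A k (m - i + 1) ≤ j) with hSR
  set SL := (Finset.Icc 1 ℓ).filter (fun k => j < A k (m - i)) with hSL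
  congr 1
  -- right part: card = sup
  · by_cases hne : SR.Nonempty
    · set M := SR.sup id with hM
      have hMmem : M ∈ SR := by
        rw [hM, ← Finset.sup'_eq_sup hne, ← Finset.max'_eq_sup']
        exact Finset.max'_mem _ hne
      simp only [hSR, Finset.mem_filter, Finset.mem_Icc] at hMmem
      have hSReq : SR = Finset.Icc 1 M := by
        ext k
        simp only [hSR, Finset.mem_filter, Finset.mem_Icc]
        constructor
        · intro ⟨⟨h1, _⟩, _⟩
          exact ⟨h1, Finset.le_sup (f := id) (by simp [hSR]; tauto)⟩
        · intro ⟨h1, h2⟩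
          refine ⟨⟨h1, le_trans h2 hMmem.1.2⟩, ?_⟩
          exact le_trans (aux_chain_mono m n ℓ A hA (m - i + 1) (by omega) k M h1 h2
            hMmem.1.2) hMmem.2
      rw [hSReq, Nat.card_Icc]
      omega
    · rw [Finset.not_nonempty_iff_eq_empty] at hne
      simp [hne]
  -- left part
  · by_cases hne : SL.Nonempty
    · rw [dif_pos hne]
      set mn := SL.min' hne with hmn'
      have hmnmem : mn ∈ SL := Finset.min'_mem _ hne
      simp only [hSL, Finset.mem_filter, Finset.mem_Icc] at hmnmem
      have hSLeq : SL = Finset.Icc mn ℓ := by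
        ext k
        simp only [hSL, Finset.mem_filter, Finset.mem_Icc]
        constructor
        · intro ⟨⟨_, h2⟩, h3⟩
          refine ⟨Finset.min'_le _ _ ?_, h2⟩
          simp only [hSL, Finset.mem_filter, Finset.mem_Icc]; omega
        · intro ⟨h1, h2⟩
          refine ⟨⟨le_trans hmnmem.1.1 h1, h2⟩, ?_⟩
          exact lt_of_lt_of_le hmnmem.2
            (aux_chain_mono m n ℓ A hA (m - i) (by omega) mn k hmnmem.1.1 h1 h2)
      rw [hSLeq, Nat.card_Icc]
    · rw [dif_neg hne]
      rw [Finset.not_nonempty_iff_eq_empty] at hne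
      simp [hne]
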